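/- With d = 1, O = 1, M = 4 and residuals f₁(θ) = −θ, f₂(θ) = θ, f₃(θ) = 1, f₄(θ) = −1 on ℝ, the percentile objective φ(θ) (second largest of the four values) satisfies inf φ = 0 with Argmin(φ) = {0}, while min over subsets S of size d+1 = 2 of inf_θ max_{m∈S} f_m(θ) equals −1, attained by S = {1,4} with Argmin(max{f₁, f₄}) = [1, ∞). -/

import Mathlib

noncomputable def pctl {M : ℕ} (O : ℕ) (hO : O < M) (z : Fin M → ℝ) : ℝ :=
  z (Tuple.sort z ⟨M - 1 - O, by omega⟩)

lemma mono4 {g : Fin 4 → ℝ} (h01 : g 0 ≤ g 1) (h12 : g 1 ≤ g 2) (h23 : g 2 ≤ g 3) :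
    Monotone g := by
  intro a b hab
  fin_cases a <;> fin_cases b <;> simp_all <;> first | rfl | linarith

lemma pctl_eq_of_mono {z : Fin 4 → ℝ} (σ : Equiv.Perm (Fin 4)) (h : Monotone (z ∘ σ)) :
    pctl 1 (by norm_num) z = z (σ 2) := by
  have hs := Tuple.comp_sort_eq_comp_iff_monotone.mpr h
  show z (Tuple.sort z ⟨2, by omega⟩) = z (σ 2)
  exact (congrFun hs 2).symm

lemma phi_eq (θ : ℝ) : pctl 1 (by norm_num) (![-θ, θ, 1, -1] : Fin 4 → ℝ) = min |θ| 1 := by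
  rcases le_total θ 0 with h0 | h0
  · rcases le_total θ (-1) with h1 | h1
    · rw [pctl_eq_of_mono ⟨![1,3,2,0], ![3,0,2,1], by decide, by decide⟩
        (mono4 (by simp <;> linarith) (by simp <;> linarith) (by simp <;> linarith))]
      have h : |θ| ≥ 1 := by rw [abs_of_nonpos h0]; linarith
      simp [min_eq_right h]
    · rw [pctl_eq_of_mono ⟨![3,1,0,2], ![2,1,3,0], by decide, by decide⟩
        (mono4 (by simp <;> linarith) (by simp <;> linarith) (by simp <;> linarith))]
      have h : |θ| ≤ 1 := abs_le.mpr ⟨h1, le_trans h0 zero_le_one⟩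
      simp [min_eq_left h, abs_of_nonpos h0] <;> linarith
  · rcases le_total θ 1 with h1 | h1
    · rw [pctl_eq_of_mono ⟨![3,0,1,2], ![1,2,3,0], by decide, by decide⟩
        (mono4 (by simp <;> linarith) (by simp <;> linarith) (by simp <;> linarith))]
      have h : |θ| ≤ 1 := abs_le.mpr ⟨by linarith, h1⟩
      simp [min_eq_left h, abs_of_nonneg h0] <;> linarith
    · rw [pctl_eq_of_mono ⟨![0,3,2,1], ![0,3,2,1], by decide, by decide⟩
        (mono4 (by simp <;> linarith) (by simp <;> linarith) (by simp <;> linarith))]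
      have h : |θ| ≥ 1 := by rw [abs_of_nonneg h0]; linarith
      simp [min_eq_right h]

theorem stmt_18 (f : Fin 4 → ℝ → ℝ)
    (hf : f = ![fun θ => -θ, fun θ => θ, fun _ => 1, fun _ => -1]) :
    pctl 1 (by omega) (fun m => f m (0 : ℝ)) = 0 ∧
    ({θ : ℝ | ∀ θ', pctl 1 (by omega) (fun m => f m θ) ≤
        pctl 1 (by omega) (fun m => f m θ')} = {0}) ∧
    (⨅ S : {S : Finset (Fin 4) // S.card = 2}, ⨅ θ : ℝ,
        ((S.1.sup' (Finset.card_pos.mp (by rw [S.2]; omega)) (fun m => f m θ) : ℝ) : EReal))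
      = (-1 : EReal) ∧
    (⨅ θ : ℝ, ((max (f 0 θ) (f 3 θ) : ℝ) : EReal)) = (-1 : EReal) ∧
    ({θ : ℝ | ∀ θ', max (f 0 θ) (f 3 θ) ≤ max (f 0 θ') (f 3 θ')} = Set.Ici (1 : ℝ)) := by
  have key : ∀ θ : ℝ, pctl 1 (by omega) (fun m => f m θ) = min |θ| 1 := by
    intro θ
    rw [show (fun m => f m θ) = ![-θ, θ, 1, -1] from by
      funext m; fin_cases m <;> simp [hf]]
    exact phi_eq θ
  have pair : ∀ (θ : ℝ) (a b : Fin 4), a ≠ b → -1 ≤ max (f a θ) (f b θ) := by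
    intro θ a b hab
    rcases le_total θ 0 with h | h <;> fin_cases a <;> fin_cases b <;>
      simp_all [hf, le_max_iff] <;> first | linarith | (left; linarith) | (right; linarith)
  have hsup : ∀ (S : Finset (Fin 4)), S.card = 2 → ∀ (hS : S.Nonempty) (θ : ℝ),
      -1 ≤ S.sup' hS (fun m => f m θ) := by
    intro S hS2 hS θ
    obtain ⟨a, ha, b, hb, hab⟩ := Finset.one_lt_card.mp (show 1 < S.card by omega)
    exact le_trans (pair θ a b hab)
      (max_le (Finset.le_sup' (fun m => f m θ) ha) (Finset.le_sup' (fun m => f m θ) hb))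
  refine ⟨?_, ?_, ?_, ?_, ?_⟩
  · rw [key]; simp
  · ext θ
    simp only [Set.mem_setOf_eq, key, Set.mem_singleton_iff]
    constructor
    · intro h
      have h0 := h 0
      simp at h0
      rcases h0 with h0 | h0
      · exact h0
      · linarith
    · rintro rfl θ'
      have : (0:ℝ) ≤ min |θ'| 1 := le_min (abs_nonneg _) zero_le_one
      simpa using this
  · apply le_antisymm
    · refine le_trans (iInf_le _ ⟨({0, 3} : Finset (Fin 4)), by decide⟩) ?_
      refine le_trans (iInf_le _ (1 : ℝ)) ?_
      have : ({0, 3} : Finset (Fin 4)).sup'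
          (Finset.card_pos.mp (by decide)) (fun m => f m (1 : ℝ)) = -1 := by
        rw [Finset.sup'_insert, Finset.sup'_singleton]
        simp [hf]
        exact Finset.singleton_nonempty 3
      rw [this]
      simp
    · refine le_iInf fun S => le_iInf fun θ => ?_
      rw [show (-1 : EReal) = ((-1 : ℝ) : EReal) by norm_num]
      exact EReal.coe_le_coe_iff.mpr (hsup S.1 S.2 _ θ)
  · apply le_antisymm
    · refine le_trans (iInf_le _ (1 : ℝ)) ?_
      simp [hf]
    · refine le_iInf fun θ => ?_
      rw [show (-1 : EReal) = ((-1 : ℝ) : EReal) by norm_num]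
      refine EReal.coe_le_coe_iff.mpr ?_
      simp [hf]
  · ext θ
    simp only [Set.mem_setOf_eq, Set.mem_Ici]
    have h03 : ∀ t : ℝ, max (f 0 t) (f 3 t) = max (-t) (-1) := by
      intro t; simp [hf]
    simp only [h03]
    constructor
    · intro h
      have h1 : max (-θ) (-1 : ℝ) ≤ -1 := by simpa using h 1
      have h2 := le_max_left (-θ) (-1 : ℝ)
      linarith
    · intro h θ'
      rw [max_eq_right (by linarith : -θ ≤ (-1 : ℝ))]
      exact le_max_right _ _
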